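/- Let F = {f_1, …, f_m} be a t-sparse family of coverage functions on ground set [n] with |S| ≤ s for all S ∈ S, let F_i denote the multilinear extension of f_i, and let k ≥ 2. Then there exists a fractional k-coloring Y : [n] → Δ_k with at most m·k·t·s fractional elements such that F_i(Y_ℓ) = F_i(Y_{ℓ'}) for all i ∈ [m] and all colors ℓ, ℓ' ∈ [k]. -/
import Mathlib


open Finset

/-- Coverage function determined by a multiset `C` of subsets of `[n]`:
`f(T) = Σ_{S ∈ C} min(|S ∩ T|, 1)`. -/
noncomputable def cov {n : ℕ} (C : Multiset (Finset (Fin n))) (T : Finset (Fin n)) : ℝ :=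
  (C.map (fun s => min ((s ∩ T).card : ℝ) 1)).sum

/-- Multilinear extension of a set function `f : 2^{[n]} → ℝ`. -/
noncomputable def mlext {n : ℕ} (f : Finset (Fin n) → ℝ) (x : Fin n → ℝ) : ℝ :=
  ∑ T : Finset (Fin n), f T * (∏ i ∈ T, x i) * (∏ j ∈ Tᶜ, (1 - x j))

/-- `Y` is a fractional `k`-coloring: each `Y j` lies in the simplex `Δ_k`. -/
def IsFracColoring {n k : ℕ} (Y : Fin n → Fin k → ℝ) : Prop :=
  ∀ j : Fin n, (∀ ℓ, 0 ≤ Y j ℓ ∧ Y j ℓ ≤ 1) ∧ (∑ ℓ, Y j ℓ) = 1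

lemma sum_w_eq_one {n : ℕ} (x : Fin n → ℝ) :
    ∑ T : Finset (Fin n), (∏ i ∈ T, x i) * (∏ j ∈ Tᶜ, (1 - x j)) = 1 := by
  have h := Finset.prod_add x (fun j => 1 - x j) (univ : Finset (Fin n))
  simp only [Finset.powerset_univ] at h
  have h2 : ∀ T : Finset (Fin n), Finset.univ \ T = Tᶜ := fun T => by
    simp [Finset.compl_eq_univ_sdiff]
  calc ∑ T : Finset (Fin n), (∏ i ∈ T, x i) * (∏ j ∈ Tᶜ, (1 - x j))
      = ∏ j : Fin n, (x j + (1 - x j)) := by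
        rw [h]; exact Finset.sum_congr rfl (fun T _ => by rw [h2])
    _ = 1 := by simp

lemma sum_w_indicator {n : ℕ} (s : Finset (Fin n)) (x : Fin n → ℝ) :
    ∑ T : Finset (Fin n), (if s ∩ T = ∅ then (1:ℝ) else 0) * (∏ i ∈ T, x i) * (∏ j ∈ Tᶜ, (1 - x j))
      = ∏ j ∈ s, (1 - x j) := by
  have hfil : (univ : Finset (Finset (Fin n))).filter (fun T => s ∩ T = ∅) = (sᶜ).powerset := by
    ext T
    simp only [Finset.mem_filter, Finset.mem_univ, true_and, Finset.mem_powerset]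
    constructor
    · intro h j hj
      simp only [Finset.mem_compl]
      intro hjs
      have : j ∈ s ∩ T := Finset.mem_inter.mpr ⟨hjs, hj⟩
      rw [h] at this; exact absurd this (Finset.notMem_empty j)
    · intro h
      ext j
      simp only [Finset.mem_inter, Finset.notMem_empty, iff_false]
      rintro ⟨hjs, hjT⟩
      exact (Finset.mem_compl.mp (h hjT)) hjs
  calc ∑ T : Finset (Fin n), (if s ∩ T = ∅ then (1:ℝ) else 0) * (∏ i ∈ T, x i) * (∏ j ∈ Tᶜ, (1 - x j))
      = ∑ T ∈ (sᶜ).powerset, (∏ i ∈ T, x i) * (∏ j ∈ Tᶜ, (1 - x j)) := by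
        rw [← hfil, Finset.sum_filter]
        exact Finset.sum_congr rfl (fun T _ => by split <;> ring
        )
    _ = ∑ T ∈ (sᶜ).powerset, (∏ j ∈ s, (1 - x j)) * ((∏ i ∈ T, x i) * (∏ j ∈ sᶜ \ T, (1 - x j))) := by
        refine Finset.sum_congr rfl (fun T hT => ?_)
        rw [Finset.mem_powerset] at hT
        have hTc : Tᶜ = s ∪ (sᶜ \ T) := by
          ext j
          simp only [Finset.mem_compl, Finset.mem_union, Finset.mem_sdiff]
          constructor
          · intro hj
            by_cases hjs : j ∈ s
            · exact Or.inl hjs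
            · exact Or.inr ⟨hjs, hj⟩
          · rintro (hjs | ⟨_, hj⟩)
            · exact fun hjT => (Finset.mem_compl.mp (hT hjT)) hjs
            · exact hj
        have hdisj : Disjoint s (sᶜ \ T) :=
          Finset.disjoint_of_subset_right (Finset.sdiff_subset) (disjoint_compl_right)
        rw [hTc, Finset.prod_union hdisj]; ring
    _ = (∏ j ∈ s, (1 - x j)) * ∑ T ∈ (sᶜ).powerset, (∏ i ∈ T, x i) * (∏ j ∈ sᶜ \ T, (1 - x j)) := by
        rw [Finset.mul_sum]
    _ = ∏ j ∈ s, (1 - x j) := by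
        rw [← Finset.prod_add x (fun j => 1 - x j) sᶜ]; simp


lemma mlext_single {n : ℕ} (a : Finset (Fin n)) (x : Fin n → ℝ) :
    mlext (fun T => min ((a ∩ T).card : ℝ) 1) x = 1 - ∏ j ∈ a, (1 - x j) := by
  have key : ∀ T : Finset (Fin n),
      min ((a ∩ T).card : ℝ) 1 = 1 - (if a ∩ T = ∅ then (1:ℝ) else 0) := by
    intro T
    by_cases h : a ∩ T = ∅
    · simp [h]
    · have h1 : 1 ≤ (a ∩ T).card := Nat.one_le_iff_ne_zero.mpr (fun hc => h (Finset.card_eq_zero.mp hc))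
      have : (1:ℝ) ≤ ((a ∩ T).card : ℝ) := by exact_mod_cast h1
      simp [h, min_eq_right this]
  unfold mlext
  calc ∑ T : Finset (Fin n), min ((a ∩ T).card : ℝ) 1 * (∏ i ∈ T, x i) * (∏ j ∈ Tᶜ, (1 - x j))
      = ∑ T : Finset (Fin n), ((∏ i ∈ T, x i) * (∏ j ∈ Tᶜ, (1 - x j))
          - (if a ∩ T = ∅ then (1:ℝ) else 0) * (∏ i ∈ T, x i) * (∏ j ∈ Tᶜ, (1 - x j))) := by
        refine Finset.sum_congr rfl (fun T _ => ?_); rw [key T]; ring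
    _ = 1 - ∏ j ∈ a, (1 - x j) := by
        rw [Finset.sum_sub_distrib, sum_w_eq_one, sum_w_indicator]

lemma mlext_add {n : ℕ} (f g : Finset (Fin n) → ℝ) (x : Fin n → ℝ) :
    mlext (fun T => f T + g T) x = mlext f x + mlext g x := by
  unfold mlext
  rw [← Finset.sum_add_distrib]
  exact Finset.sum_congr rfl (fun T _ => by ring)

lemma mlext_cov {n : ℕ} (C : Multiset (Finset (Fin n))) (x : Fin n → ℝ) :
    mlext (cov C) x = (C.map (fun s => 1 - ∏ j ∈ s, (1 - x j))).sum := by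
  induction C using Multiset.induction with
  | empty => simp [cov, mlext]
  | cons a C ih =>
    have hc : cov (a ::ₘ C) = fun T => min ((a ∩ T).card : ℝ) 1 + cov C T := by
      funext T; simp [cov, Multiset.map_cons, Multiset.sum_cons]
    rw [hc, mlext_add, mlext_single, ih, Multiset.map_cons, Multiset.sum_cons]

noncomputable def Gv {n : ℕ} (C : Multiset (Finset (Fin n))) (x : Fin n → ℝ) : ℝ :=
  (C.map (fun s => ∏ j ∈ s, (1 - x j))).sum

-- affine expansion of a product when at most one factor moves
lemma prod_affine {ι : Type*} [DecidableEq ι] {s W : Finset ι}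
    (hcard : (s ∩ W).card ≤ 1) (a b : ι → ℝ) (hb : ∀ j, j ∉ W → b j = 0) :
    ∏ j ∈ s, (a j + b j) = (∏ j ∈ s, a j) + (∑ j ∈ s, b j) * ∏ j ∈ s \ W, a j := by
  rcases Finset.eq_empty_or_nonempty (s ∩ W) with hiW | hne
  case inr =>
    have hone : (s ∩ W).card = 1 := le_antisymm hcard (Finset.card_pos.mpr hne)
    obtain ⟨j0, hiW⟩ := Finset.card_eq_one.mp hone
    obtain ⟨hj0s, hj0W⟩ := Finset.mem_inter.mp (hiW ▸ Finset.mem_singleton_self j0)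
    have hsd : s \ W = s.erase j0 := by
      ext j
      simp only [Finset.mem_sdiff, Finset.mem_erase]
      constructor
      · rintro ⟨hjs, hjW⟩
        exact ⟨fun h => hjW (h ▸ hj0W), hjs⟩
      · rintro ⟨hne, hjs⟩
        refine ⟨hjs, fun hjW => hne ?_⟩
        have : j ∈ s ∩ W := Finset.mem_inter.mpr ⟨hjs, hjW⟩
        rw [hiW] at this; exact Finset.mem_singleton.mp this
    have hb' : ∀ j ∈ s.erase j0, b j = 0 := by
      intro j hj
      obtain ⟨hne, hjs⟩ := Finset.mem_erase.mp hj
      refine hb j (fun hjW => hne ?_)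
      have : j ∈ s ∩ W := Finset.mem_inter.mpr ⟨hjs, hjW⟩
      rw [hiW] at this; exact Finset.mem_singleton.mp this
    have hsumb : ∑ j ∈ s, b j = b j0 := by
      rw [← Finset.add_sum_erase _ _ hj0s, Finset.sum_eq_zero hb', add_zero]
    have hL : ∏ j ∈ s, (a j + b j) = (a j0 + b j0) * ∏ j ∈ s.erase j0, a j := by
      rw [← Finset.mul_prod_erase s (fun j => a j + b j) hj0s]
      congr 1
      exact Finset.prod_congr rfl (fun j hj => by rw [hb' j hj, add_zero])
    rw [hL, hsd, hsumb, ← Finset.mul_prod_erase s a hj0s]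
    ring
  case inl =>
    have hb' : ∀ j ∈ s, b j = 0 := by
      intro j hj
      refine hb j (fun hjW => ?_)
      have : j ∈ s ∩ W := Finset.mem_inter.mpr ⟨hj, hjW⟩
      rw [hiW] at this; exact Finset.notMem_empty j this
    rw [Finset.sum_eq_zero hb', zero_mul, add_zero]
    exact Finset.prod_congr rfl (fun j hj => by rw [hb' j hj, add_zero])

-- a fractional element has at least two coordinates strictly inside (0,1)
lemma two_frac_coords {k : ℕ} (y : Fin k → ℝ)
    (hbd : ∀ ℓ, 0 ≤ y ℓ ∧ y ℓ ≤ 1) (hsum : ∑ ℓ, y ℓ = 1)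
    (hfrac : ¬ (∀ ℓ, y ℓ = 0 ∨ y ℓ = 1)) :
    ∃ ℓ1 ℓ2 : Fin k, ℓ1 ≠ ℓ2 ∧ (0 < y ℓ1 ∧ y ℓ1 < 1) ∧ (0 < y ℓ2 ∧ y ℓ2 < 1) := by
  push_neg at hfrac
  obtain ⟨ℓ1, h1, h1'⟩ := hfrac
  have hopen : ∀ ℓ, y ℓ ≠ 0 → y ℓ ≠ 1 → 0 < y ℓ ∧ y ℓ < 1 := fun ℓ h h' =>
    ⟨lt_of_le_of_ne (hbd ℓ).1 (Ne.symm h), lt_of_le_of_ne (hbd ℓ).2 h'⟩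
  have ho1 := hopen ℓ1 h1 h1'
  by_contra hcon
  push_neg at hcon
  -- then all other coordinates are 0 or 1
  have hothers : ∀ ℓ, ℓ ≠ ℓ1 → y ℓ = 0 ∨ y ℓ = 1 := by
    intro ℓ hne
    by_contra h
    push_neg at h
    have ho := hopen ℓ h.1 h.2
    exact absurd ho.2 (not_lt.mpr (hcon ℓ1 ℓ (fun he => hne he.symm) ho1 ho.1))
  -- sum of the others is a card, hence y ℓ1 = 1 - integer, contradiction
  have hsplit : y ℓ1 + ∑ ℓ ∈ Finset.univ.erase ℓ1, y ℓ = 1 := by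
    rw [Finset.add_sum_erase _ y (Finset.mem_univ ℓ1)]; exact hsum
  have hcardsum : ∑ ℓ ∈ Finset.univ.erase ℓ1, y ℓ
      = (((Finset.univ.erase ℓ1).filter (fun ℓ => y ℓ = 1)).card : ℝ) := by
    rw [Finset.card_filter]
    push_cast
    refine Finset.sum_congr rfl (fun ℓ hℓ => ?_)
    rcases hothers ℓ (Finset.mem_erase.mp hℓ).1 with h | h <;> simp [h]
  set N := ((Finset.univ.erase ℓ1).filter (fun ℓ => y ℓ = 1)).card with hN
  have hy1 : y ℓ1 = 1 - (N : ℝ) := by rw [hcardsum] at hsplit; linarith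
  have : (0:ℝ) < 1 - N := hy1 ▸ ho1.1
  have : (N:ℝ) < 1 := by linarith
  have hN0 : N = 0 := by exact_mod_cast Nat.lt_one_iff.mp (by exact_mod_cast this)
  rw [hN0] at hy1
  simp at hy1
  exact ho1.2.ne hy1

lemma greedy_indep {α : Type*} [DecidableEq α] (Ncl : α → Finset α)
    (hmem : ∀ j, j ∈ Ncl j) (hsymm : ∀ j j', j' ∈ Ncl j → j ∈ Ncl j')
    (d : ℕ) (hd : ∀ j, (Ncl j).card ≤ d) :
    ∀ N : ℕ, ∀ A : Finset α, A.card ≤ N →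
      ∃ W, W ⊆ A ∧ (∀ j ∈ W, ∀ j' ∈ W, j ≠ j' → j' ∉ Ncl j) ∧ A.card ≤ W.card * d := by
  intro N
  induction N with
  | zero =>
    intro A hA
    exact ⟨∅, Finset.empty_subset A, by simp, by omega⟩
  | succ N ih =>
    intro A hA
    rcases Finset.eq_empty_or_nonempty A with rfl | ⟨a, ha⟩
    · exact ⟨∅, Finset.empty_subset _, by simp, by simp⟩
    · set A' := A \ Ncl a with hA'
      have hsub : A' ⊆ A.erase a := by
        intro x hx
        obtain ⟨hxA, hxN⟩ := Finset.mem_sdiff.mp hx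
        exact Finset.mem_erase.mpr ⟨fun h => hxN (h ▸ hmem a), hxA⟩
      have hcard' : A'.card ≤ N := by
        have h1 := Finset.card_le_card hsub
        have h2 := Finset.card_erase_of_mem ha
        omega
      obtain ⟨W', hW'sub, hW'ind, hW'card⟩ := ih A' hcard'
      have haA' : a ∉ A' := fun h => (Finset.mem_sdiff.mp h).2 (hmem a)
      have haW' : a ∉ W' := fun h => haA' (hW'sub h)
      refine ⟨insert a W', ?_, ?_, ?_⟩
      · intro x hx
        rcases Finset.mem_insert.mp hx with rfl | hx
        · exact ha
        · exact (Finset.mem_sdiff.mp (hW'sub hx)).1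
      · intro j hj j' hj' hne
        rcases Finset.mem_insert.mp hj with rfl | hjW
        · rcases Finset.mem_insert.mp hj' with rfl | hj'W
          · exact absurd rfl hne
          · exact (Finset.mem_sdiff.mp (hW'sub hj'W)).2
        · rcases Finset.mem_insert.mp hj' with rfl | hj'W
          · exact fun hc => (Finset.mem_sdiff.mp (hW'sub hjW)).2 (hsymm j j' hc)
          · exact hW'ind j hjW j' hj'W hne
      · have hAsub : A ⊆ A' ∪ Ncl a := by
          intro x hx
          by_cases hxN : x ∈ Ncl a
          · exact Finset.mem_union_right _ hxN
          · exact Finset.mem_union_left _ (Finset.mem_sdiff.mpr ⟨hx, hxN⟩)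
        have h1 : A.card ≤ A'.card + (Ncl a).card :=
          le_trans (Finset.card_le_card hAsub) (Finset.card_union_le _ _)
        have h2 := hd a
        rw [Finset.card_insert_of_notMem haW']
        have : (W'.card + 1) * d = W'.card * d + d := by ring
        omega

lemma exists_nonzero_kernel {α β : Type*} [Fintype α] [Fintype β]
    (f : (α → ℝ) → (β → ℝ))
    (hadd : ∀ c c', f (c + c') = f c + f c')
    (hsmul : ∀ (a : ℝ) c, f (a • c) = a • f c)
    (hcard : Fintype.card β < Fintype.card α) :
    ∃ c : α → ℝ, c ≠ 0 ∧ f c = 0 := by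
  let L : (α → ℝ) →ₗ[ℝ] (β → ℝ) :=
    { toFun := f, map_add' := hadd, map_smul' := hsmul }
  have hrank : Module.finrank ℝ (β → ℝ) < Module.finrank ℝ (α → ℝ) := by
    rw [Module.finrank_fintype_fun_eq_card, Module.finrank_fintype_fun_eq_card]
    exact hcard
  have hninj : ¬ Function.Injective L := fun hinj =>
    absurd (LinearMap.finrank_le_finrank_of_injective hinj) (not_le.mpr hrank)
  rw [Function.not_injective_iff] at hninj
  obtain ⟨c1, c2, heq, hne⟩ := hninj
  refine ⟨c1 - c2, sub_ne_zero.mpr hne, ?_⟩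
  have : L (c1 - c2) = 0 := by rw [map_sub, heq, sub_self]
  exact this

lemma step_lemma {n m t k s : ℕ} (hk : 2 ≤ k) (ht : 1 ≤ t) (hs : 1 ≤ s)
    (S : Fin m → Multiset (Finset (Fin n)))
    (hsparse : ∀ j : Fin n, (∑ i, ((S i).filter (fun s' => j ∈ s')).card) ≤ t)
    (hsize : ∀ i : Fin m, ∀ s' ∈ S i, s'.card ≤ s)
    (Y : Fin n → Fin k → ℝ) (hY : IsFracColoring Y)
    (hZ : m * k * (t * s) <
      ((univ : Finset (Fin n)).filter (fun j => ¬ ∀ ℓ, Y j ℓ = 0 ∨ Y j ℓ = 1)).card) :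
    ∃ Y' : Fin n → Fin k → ℝ, IsFracColoring Y' ∧
      (∀ (i : Fin m) (ℓ : Fin k), Gv (S i) (fun j => Y' j ℓ) = Gv (S i) (fun j => Y j ℓ)) ∧
      ((univ : Finset (Fin n × Fin k)).filter (fun p => Y' p.1 p.2 ≠ 0 ∧ Y' p.1 p.2 ≠ 1)).card
        < ((univ : Finset (Fin n × Fin k)).filter (fun p => Y p.1 p.2 ≠ 0 ∧ Y p.1 p.2 ≠ 1)).card := by
  classical
  set Z := (univ : Finset (Fin n)).filter (fun j => ¬ ∀ ℓ, Y j ℓ = 0 ∨ Y j ℓ = 1) with hZdef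
  -- closed neighborhoods
  set Ncl : Fin n → Finset (Fin n) := fun j =>
    insert j ((univ : Finset (Fin m)).biUnion
      (fun i => (((S i).filter (fun s' => j ∈ s')).toFinset).biUnion id)) with hNcl
  have hmem : ∀ j, j ∈ Ncl j := fun j => Finset.mem_insert_self _ _
  have hmemN : ∀ j j' : Fin n, j' ∈ Ncl j ↔
      (j' = j ∨ ∃ i : Fin m, ∃ s' ∈ S i, j ∈ s' ∧ j' ∈ s') := by
    intro j j'
    simp only [hNcl, Finset.mem_insert, Finset.mem_biUnion, Finset.mem_univ, true_and,
      Multiset.mem_toFinset, Multiset.mem_filter, id]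
    constructor
    · rintro (rfl | ⟨i, s', ⟨hs1, hs2⟩, hj'⟩)
      · exact Or.inl rfl
      · exact Or.inr ⟨i, s', hs1, hs2, hj'⟩
    · rintro (rfl | ⟨i, s', hs1, hs2, hj'⟩)
      · exact Or.inl rfl
      · exact Or.inr ⟨i, s', ⟨hs1, hs2⟩, hj'⟩
  have hsymm : ∀ j j', j' ∈ Ncl j → j ∈ Ncl j' := by
    intro j j' h
    rcases (hmemN j j').mp h with rfl | ⟨i, s', h1, h2, h3⟩
    · exact hmem _
    · exact (hmemN j' j).mpr (Or.inr ⟨i, s', h1, h3, h2⟩)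
  have hd : ∀ j, (Ncl j).card ≤ t * s := by
    intro j
    by_cases hex : ∃ i : Fin m, ∃ s' ∈ S i, j ∈ s'
    · obtain ⟨i0, s0, hs0, hj0⟩ := hex
      have hjin : j ∈ (univ : Finset (Fin m)).biUnion
          (fun i => (((S i).filter (fun s' => j ∈ s')).toFinset).biUnion id) := by
        simp only [Finset.mem_biUnion, Finset.mem_univ, true_and, Multiset.mem_toFinset,
          Multiset.mem_filter, id]
        exact ⟨i0, s0, ⟨hs0, hj0⟩, hj0⟩
      have hNj : Ncl j = (univ : Finset (Fin m)).biUnion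
          (fun i => (((S i).filter (fun s' => j ∈ s')).toFinset).biUnion id) := by
        show insert j _ = _
        exact Finset.insert_eq_self.mpr hjin
      rw [hNj]
      calc ((univ : Finset (Fin m)).biUnion
          (fun i => (((S i).filter (fun s' => j ∈ s')).toFinset).biUnion id)).card
          ≤ ∑ i : Fin m, ((((S i).filter (fun s' => j ∈ s')).toFinset).biUnion id).card :=
            Finset.card_biUnion_le
        _ ≤ ∑ i : Fin m, ((S i).filter (fun s' => j ∈ s')).card * s := by
            refine Finset.sum_le_sum (fun i _ => ?_)
            calc ((((S i).filter (fun s' => j ∈ s')).toFinset).biUnion id).card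
                ≤ ∑ s' ∈ ((S i).filter (fun s' => j ∈ s')).toFinset, (id s').card :=
                  Finset.card_biUnion_le
              _ ≤ ∑ s' ∈ ((S i).filter (fun s' => j ∈ s')).toFinset, s := by
                  refine Finset.sum_le_sum (fun s' hs' => ?_)
                  have := Multiset.mem_toFinset.mp hs'
                  exact hsize i s' (Multiset.mem_of_mem_filter this)
              _ = (((S i).filter (fun s' => j ∈ s')).toFinset).card * s := by
                  rw [Finset.sum_const, smul_eq_mul]
              _ ≤ ((S i).filter (fun s' => j ∈ s')).card * s :=
                  Nat.mul_le_mul_right s (Multiset.toFinset_card_le _)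
        _ = (∑ i : Fin m, ((S i).filter (fun s' => j ∈ s')).card) * s := by
            rw [Finset.sum_mul]
        _ ≤ t * s := Nat.mul_le_mul_right s (hsparse j)
    · have hempty : ∀ i : Fin m, ((S i).filter (fun s' => j ∈ s')) = 0 := by
        intro i
        rw [Multiset.filter_eq_nil]
        intro s' hs' hj'
        exact hex ⟨i, s', hs', hj'⟩
      have hbu : ((univ : Finset (Fin m)).biUnion
          (fun i => (((S i).filter (fun s' => j ∈ s')).toFinset).biUnion id)) = ∅ := by
        refine Finset.eq_empty_of_forall_notMem (fun x hx => ?_)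
        simp only [Finset.mem_biUnion, Finset.mem_univ, true_and, Multiset.mem_toFinset, id] at hx
        obtain ⟨i, s', hs', _⟩ := hx
        rw [hempty i] at hs'
        exact absurd hs' (Multiset.notMem_zero s')
      have hNj : Ncl j = {j} := by
        show insert j _ = {j}
        rw [hbu]
        rfl
      rw [hNj, Finset.card_singleton]
      exact Nat.one_le_iff_ne_zero.mpr (Nat.mul_ne_zero (by omega) (by omega))
  -- independent set W
  obtain ⟨W, hWZ, hWind, hWcard⟩ :=
    greedy_indep Ncl hmem hsymm (t * s) hd Z.card Z (le_refl _)
  have hWbig : m * k < W.card := by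
    have : m * k * (t * s) < W.card * (t * s) := lt_of_lt_of_le hZ hWcard
    exact Nat.lt_of_mul_lt_mul_right this
  -- each set meets W at most once
  have hinter : ∀ (i : Fin m), ∀ s' ∈ S i, (s' ∩ W).card ≤ 1 := by
    intro i s' hs'
    rw [Finset.card_le_one]
    intro a ha b hb
    obtain ⟨has, haW⟩ := Finset.mem_inter.mp ha
    obtain ⟨hbs, hbW⟩ := Finset.mem_inter.mp hb
    by_contra hne
    exact hWind a haW b hbW hne ((hmemN a b).mpr (Or.inr ⟨i, s', hs', has, hbs⟩))
  -- choose two fractional colors for each element of W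
  have hex : ∀ j : Fin n, ∃ p : Fin k × Fin k, j ∈ W →
      p.1 ≠ p.2 ∧ (0 < Y j p.1 ∧ Y j p.1 < 1) ∧ (0 < Y j p.2 ∧ Y j p.2 < 1) := by
    intro j
    by_cases hjW : j ∈ W
    · have hjZ := hWZ hjW
      rw [hZdef, Finset.mem_filter] at hjZ
      obtain ⟨ℓ1, ℓ2, h12, h1, h2⟩ :=
        two_frac_coords (Y j) (hY j).1 (hY j).2 hjZ.2
      exact ⟨(ℓ1, ℓ2), fun _ => ⟨h12, h1, h2⟩⟩
    · exact ⟨(⟨0, by omega⟩, ⟨0, by omega⟩), fun h => absurd h hjW⟩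
  choose pr hpr using hex
  set lp : Fin n → Fin k := fun j => (pr j).1 with hlp
  set lm : Fin n → Fin k := fun j => (pr j).2 with hlm
  set eps : Fin n → Fin k → ℝ := fun j ℓ =>
    (if ℓ = lp j then (1:ℝ) else 0) - (if ℓ = lm j then (1:ℝ) else 0) with heps
  have hepsEq : ∀ (j : Fin n) (ℓ : Fin k),
      eps j ℓ = (if ℓ = lp j then (1:ℝ) else 0) - (if ℓ = lm j then (1:ℝ) else 0) := by
    intro j ℓ; simp only [heps]
  set Df : (↥W → ℝ) → Fin n → Fin k → ℝ := fun c j ℓ =>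
    if h : j ∈ W then c ⟨j, h⟩ * eps j ℓ else 0 with hDf
  have hDfEq : ∀ (c : ↥W → ℝ) (j : Fin n) (ℓ : Fin k),
      Df c j ℓ = if h : j ∈ W then c ⟨j, h⟩ * eps j ℓ else 0 := by
    intro c j ℓ; simp only [hDf]
  have hDfadd : ∀ (c c' : ↥W → ℝ) (j : Fin n) (ℓ : Fin k),
      Df (c + c') j ℓ = Df c j ℓ + Df c' j ℓ := by
    intro c c' j ℓ
    rw [hDfEq, hDfEq, hDfEq]
    by_cases h : j ∈ W
    · simp only [dif_pos h, Pi.add_apply]; ring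
    · simp only [dif_neg h]; ring
  have hDfsmul : ∀ (a : ℝ) (c : ↥W → ℝ) (j : Fin n) (ℓ : Fin k),
      Df (a • c) j ℓ = a * Df c j ℓ := by
    intro a c j ℓ
    rw [hDfEq, hDfEq]
    by_cases h : j ∈ W
    · simp only [dif_pos h, Pi.smul_apply, smul_eq_mul]; ring
    · simp only [dif_neg h]; ring
  -- the linearized constraint map
  set Mf : (↥W → ℝ) → (Fin m × Fin k → ℝ) := fun c p =>
    ((S p.1).map (fun s' => (∑ j ∈ s', Df c j p.2) * ∏ j2 ∈ s' \ W, (1 - Y j2 p.2))).sum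
    with hMf
  have hMfEq : ∀ (c : ↥W → ℝ) (p : Fin m × Fin k), Mf c p =
      ((S p.1).map (fun s' => (∑ j ∈ s', Df c j p.2) * ∏ j2 ∈ s' \ W, (1 - Y j2 p.2))).sum := by
    intro c p; simp only [hMf]
  obtain ⟨c, hc0, hMc⟩ : ∃ c : ↥W → ℝ, c ≠ 0 ∧ Mf c = 0 := by
    refine exists_nonzero_kernel Mf ?_ ?_ ?_
    · intro c c'
      funext p
      rw [Pi.add_apply, hMfEq, hMfEq, hMfEq]
      rw [show (fun s' : Finset (Fin n) =>
          (∑ j ∈ s', Df (c + c') j p.2) * ∏ j2 ∈ s' \ W, (1 - Y j2 p.2))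
        = (fun s' : Finset (Fin n) =>
          (∑ j ∈ s', Df c j p.2) * ∏ j2 ∈ s' \ W, (1 - Y j2 p.2)
          + (∑ j ∈ s', Df c' j p.2) * ∏ j2 ∈ s' \ W, (1 - Y j2 p.2)) from ?_]
      · exact Multiset.sum_map_add
      · funext s'
        rw [show (∑ j ∈ s', Df (c + c') j p.2)
            = (∑ j ∈ s', Df c j p.2) + (∑ j ∈ s', Df c' j p.2) from by
          rw [← Finset.sum_add_distrib]
          exact Finset.sum_congr rfl (fun j _ => hDfadd c c' j p.2)]
        ring
    · intro a c
      funext p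
      rw [Pi.smul_apply, smul_eq_mul, hMfEq, hMfEq]
      rw [show (fun s' : Finset (Fin n) =>
          (∑ j ∈ s', Df (a • c) j p.2) * ∏ j2 ∈ s' \ W, (1 - Y j2 p.2))
        = (fun s' : Finset (Fin n) =>
          a * ((∑ j ∈ s', Df c j p.2) * ∏ j2 ∈ s' \ W, (1 - Y j2 p.2))) from ?_]
      · exact Multiset.sum_map_mul_left
      · funext s'
        rw [show (∑ j ∈ s', Df (a • c) j p.2) = a * (∑ j ∈ s', Df c j p.2) from by
          rw [Finset.mul_sum]
          exact Finset.sum_congr rfl (fun j _ => hDfsmul a c j p.2)]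
        ring
    · rw [Fintype.card_prod, Fintype.card_fin, Fintype.card_fin, Fintype.card_coe]
      exact hWbig
  set Dc : Fin n → Fin k → ℝ := Df c with hDc
  have hDcEq : ∀ (j : Fin n) (ℓ : Fin k),
      Dc j ℓ = if h : j ∈ W then c ⟨j, h⟩ * eps j ℓ else 0 := by
    intro j ℓ; simp only [hDc, hDf]
  have hD0 : ∀ j : Fin n, j ∉ W → ∀ ℓ, Dc j ℓ = 0 := by
    intro j hj ℓ
    rw [hDcEq j ℓ, dif_neg hj]
  have hDW : ∀ (j : Fin n) (ℓ : Fin k), Dc j ℓ ≠ 0 → j ∈ W ∧ 0 < Y j ℓ ∧ Y j ℓ < 1 := by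
    intro j ℓ hne
    by_cases hjW : j ∈ W
    · refine ⟨hjW, ?_⟩
      have heps0 : eps j ℓ ≠ 0 := by
        intro h
        rw [hDcEq j ℓ, dif_pos hjW, h, mul_zero] at hne
        exact hne rfl
      have hor : ℓ = lp j ∨ ℓ = lm j := by
        by_contra hcon
        push_neg at hcon
        apply heps0
        rw [hepsEq j ℓ, if_neg hcon.1, if_neg hcon.2]
        ring
      obtain ⟨_, hp1, hp2⟩ := hpr j hjW
      rcases hor with rfl | rfl
      · exact hp1
      · exact hp2
    · exact absurd (hD0 j hjW ℓ) hne
  have hDsum : ∀ j : Fin n, ∑ ℓ, Dc j ℓ = 0 := by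
    intro j
    by_cases hjW : j ∈ W
    · have h1 : ∀ ℓ : Fin k, Dc j ℓ = c ⟨j, hjW⟩ * eps j ℓ := fun ℓ => by
        rw [hDcEq j ℓ, dif_pos hjW]
      rw [show (∑ ℓ, Dc j ℓ) = c ⟨j, hjW⟩ * ∑ ℓ, eps j ℓ from by
        rw [Finset.mul_sum]
        exact Finset.sum_congr rfl (fun ℓ _ => h1 ℓ)]
      have h2 : ∑ ℓ, eps j ℓ = 0 := by
        rw [Finset.sum_congr rfl (fun ℓ _ => hepsEq j ℓ), Finset.sum_sub_distrib,
          Finset.sum_ite_eq' univ (lp j) (fun _ => (1:ℝ)),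
          Finset.sum_ite_eq' univ (lm j) (fun _ => (1:ℝ))]
        simp
      rw [h2, mul_zero]
    · exact Finset.sum_eq_zero (fun ℓ _ => hD0 j hjW ℓ)
  -- a nonzero moving coordinate
  obtain ⟨j0, hj0⟩ : ∃ j0 : ↥W, c j0 ≠ 0 := by
    by_contra hcon
    push_neg at hcon
    exact hc0 (funext hcon)
  have hj0W : (j0 : Fin n) ∈ W := j0.2
  have hDj0 : Dc (j0 : Fin n) (lp (j0 : Fin n)) ≠ 0 := by
    rw [hDcEq _ _, dif_pos hj0W]
    have hne : lp (j0 : Fin n) ≠ lm (j0 : Fin n) := (hpr (j0 : Fin n) hj0W).1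
    have hepsv : eps (j0 : Fin n) (lp (j0 : Fin n)) = 1 := by
      rw [hepsEq, if_pos rfl, if_neg hne]
      ring
    rw [hepsv, mul_one]
    have hsub : (⟨(j0 : Fin n), hj0W⟩ : ↥W) = j0 := Subtype.ext rfl
    rw [hsub]
    exact hj0
  set T := (univ : Finset (Fin n × Fin k)).filter (fun p => Dc p.1 p.2 ≠ 0) with hT
  have hTne : T.Nonempty := ⟨((j0 : Fin n), lp (j0 : Fin n)), by
    rw [hT, Finset.mem_filter]; exact ⟨Finset.mem_univ _, hDj0⟩⟩
  set bnd : Fin n × Fin k → ℝ := fun p =>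
    if 0 < Dc p.1 p.2 then (1 - Y p.1 p.2) / Dc p.1 p.2 else Y p.1 p.2 / (-Dc p.1 p.2)
    with hbnd
  have hbndEq : ∀ p : Fin n × Fin k, bnd p =
      if 0 < Dc p.1 p.2 then (1 - Y p.1 p.2) / Dc p.1 p.2 else Y p.1 p.2 / (-Dc p.1 p.2) := by
    intro p; simp only [hbnd]
  obtain ⟨pm, hpmT, hpmmin⟩ := T.exists_min_image bnd hTne
  set τ := bnd pm with hτdef
  have hDpm : Dc pm.1 pm.2 ≠ 0 := by
    rw [hT, Finset.mem_filter] at hpmT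
    exact hpmT.2
  have hbndpos : ∀ p ∈ T, 0 < bnd p := by
    intro p hp
    rw [hT, Finset.mem_filter] at hp
    obtain ⟨_, hDp⟩ := hp
    obtain ⟨_, hY1, hY2⟩ := hDW p.1 p.2 hDp
    rw [hbndEq p]
    by_cases hpos : 0 < Dc p.1 p.2
    · rw [if_pos hpos]; exact div_pos (by linarith) hpos
    · rw [if_neg hpos]
      have : Dc p.1 p.2 < 0 := lt_of_le_of_ne (not_lt.mp hpos) hDp
      exact div_pos hY1 (by linarith)
  have hτpos : 0 < τ := by
    rw [hτdef]
    exact hbndpos pm (by rw [hT, Finset.mem_filter]; exact ⟨Finset.mem_univ _, hDpm⟩)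
  -- the new coloring
  set Y' : Fin n → Fin k → ℝ := fun j ℓ => Y j ℓ + τ * Dc j ℓ with hY'
  have hY'Eq : ∀ (j : Fin n) (ℓ : Fin k), Y' j ℓ = Y j ℓ + τ * Dc j ℓ := by
    intro j ℓ; simp only [hY']
  have hbox : ∀ (j : Fin n) (ℓ : Fin k), 0 ≤ Y' j ℓ ∧ Y' j ℓ ≤ 1 := by
    intro j ℓ
    rw [hY'Eq j ℓ]
    by_cases hDp : Dc j ℓ = 0
    · simp only [hDp, mul_zero, add_zero]; exact (hY j).1 ℓ
    · have hpT : (j, ℓ) ∈ T := by rw [hT, Finset.mem_filter]; exact ⟨Finset.mem_univ _, hDp⟩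
      have hτle : τ ≤ bnd (j, ℓ) := hpmmin (j, ℓ) hpT
      obtain ⟨_, hY1, hY2⟩ := hDW j ℓ hDp
      by_cases hpos : 0 < Dc j ℓ
      · have hbe : bnd (j, ℓ) = (1 - Y j ℓ) / Dc j ℓ := by rw [hbndEq (j, ℓ)]; exact if_pos hpos
        rw [hbe] at hτle
        have h2 : τ * Dc j ℓ ≤ 1 - Y j ℓ := by
          have := (le_div_iff₀ hpos).mp hτle
          linarith
        have h3 : 0 < τ * Dc j ℓ := mul_pos hτpos hpos
        constructor <;> linarith
      · have hneg : Dc j ℓ < 0 := lt_of_le_of_ne (not_lt.mp hpos) hDp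
        have hbe : bnd (j, ℓ) = Y j ℓ / (-Dc j ℓ) := by rw [hbndEq (j, ℓ)]; exact if_neg hpos
        rw [hbe] at hτle
        have h2 : τ * (-Dc j ℓ) ≤ Y j ℓ := by
          have := (le_div_iff₀ (by linarith : (0:ℝ) < -Dc j ℓ)).mp hτle
          linarith
        have h3 : τ * Dc j ℓ < 0 := mul_neg_of_pos_of_neg hτpos hneg
        constructor <;> linarith
  have hY'frac : IsFracColoring Y' := by
    intro j
    refine ⟨hbox j, ?_⟩
    rw [Finset.sum_congr rfl (fun ℓ _ => hY'Eq j ℓ), Finset.sum_add_distrib,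
      ← Finset.mul_sum, hDsum j, mul_zero, add_zero]
    exact (hY j).2
  -- G values preserved
  have hGpres : ∀ (i : Fin m) (ℓ : Fin k),
      Gv (S i) (fun j => Y' j ℓ) = Gv (S i) (fun j => Y j ℓ) := by
    intro i ℓ
    have hexpand : ∀ s' ∈ S i,
        (∏ j ∈ s', (1 - Y' j ℓ))
          = (∏ j ∈ s', (1 - Y j ℓ))
            + (-τ) * ((∑ j ∈ s', Dc j ℓ) * ∏ j2 ∈ s' \ W, (1 - Y j2 ℓ)) := by
      intro s' hs'
      have h1 : ∀ j : Fin n, 1 - Y' j ℓ = (1 - Y j ℓ) + (-(τ * Dc j ℓ)) := by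
        intro j; rw [hY'Eq j ℓ]; ring
      calc ∏ j ∈ s', (1 - Y' j ℓ)
          = ∏ j ∈ s', ((1 - Y j ℓ) + (-(τ * Dc j ℓ))) :=
            Finset.prod_congr rfl (fun j _ => h1 j)
        _ = (∏ j ∈ s', (1 - Y j ℓ))
            + (∑ j ∈ s', -(τ * Dc j ℓ)) * ∏ j2 ∈ s' \ W, (1 - Y j2 ℓ) :=
            prod_affine (hinter i s' hs') _ _
              (fun j hj => by rw [hD0 j hj ℓ, mul_zero, neg_zero])
        _ = (∏ j ∈ s', (1 - Y j ℓ))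
            + (-τ) * ((∑ j ∈ s', Dc j ℓ) * ∏ j2 ∈ s' \ W, (1 - Y j2 ℓ)) := by
            rw [show (∑ j ∈ s', -(τ * Dc j ℓ)) = (-τ) * ∑ j ∈ s', Dc j ℓ from by
              rw [Finset.mul_sum]; exact Finset.sum_congr rfl (fun j _ => by ring)]
            ring
    have hMc' : Mf c (i, ℓ) = 0 := by rw [hMc]; rfl
    have hDfc : ∀ s' : Finset (Fin n), (∑ j ∈ s', Df c j ℓ) = ∑ j ∈ s', Dc j ℓ :=
      fun s' => Finset.sum_congr rfl (fun j _ => by rw [hDc])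
    calc Gv (S i) (fun j => Y' j ℓ)
        = ((S i).map (fun s' => ∏ j ∈ s', (1 - Y' j ℓ))).sum := rfl
      _ = ((S i).map (fun s' => (∏ j ∈ s', (1 - Y j ℓ))
            + (-τ) * ((∑ j ∈ s', Dc j ℓ) * ∏ j2 ∈ s' \ W, (1 - Y j2 ℓ)))).sum :=
          congrArg Multiset.sum (Multiset.map_congr rfl hexpand)
      _ = ((S i).map (fun s' => ∏ j ∈ s', (1 - Y j ℓ))).sum
          + ((S i).map (fun s' =>
              (-τ) * ((∑ j ∈ s', Dc j ℓ) * ∏ j2 ∈ s' \ W, (1 - Y j2 ℓ)))).sum :=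
          Multiset.sum_map_add
      _ = ((S i).map (fun s' => ∏ j ∈ s', (1 - Y j ℓ))).sum
          + (-τ) * ((S i).map (fun s' =>
              (∑ j ∈ s', Dc j ℓ) * ∏ j2 ∈ s' \ W, (1 - Y j2 ℓ))).sum := by
          rw [Multiset.sum_map_mul_left]
      _ = Gv (S i) (fun j => Y j ℓ) + (-τ) * Mf c (i, ℓ) := by
          have hMfDc : Mf c (i, ℓ) = ((S i).map (fun s' =>
              (∑ j ∈ s', Dc j ℓ) * ∏ j2 ∈ s' \ W, (1 - Y j2 ℓ))).sum := by
            rw [hMfEq c (i, ℓ)]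
          rw [hMfDc]
          rfl
      _ = Gv (S i) (fun j => Y j ℓ) := by rw [hMc', mul_zero, add_zero]
  -- fractional pairs strictly decrease
  have hsub : ((univ : Finset (Fin n × Fin k)).filter
        (fun p => Y' p.1 p.2 ≠ 0 ∧ Y' p.1 p.2 ≠ 1))
      ⊆ ((univ : Finset (Fin n × Fin k)).filter
        (fun p => Y p.1 p.2 ≠ 0 ∧ Y p.1 p.2 ≠ 1)) := by
    intro p hp
    rw [Finset.mem_filter] at hp ⊢
    refine ⟨Finset.mem_univ _, ?_⟩
    by_cases hDp : Dc p.1 p.2 = 0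
    · have hpe : Y' p.1 p.2 = Y p.1 p.2 := by rw [hY'Eq, hDp, mul_zero, add_zero]
      rw [← hpe]
      exact hp.2
    · obtain ⟨_, h1, h2⟩ := hDW p.1 p.2 hDp
      exact ⟨ne_of_gt h1, ne_of_lt h2⟩
  have hpmfracY : pm ∈ ((univ : Finset (Fin n × Fin k)).filter
      (fun p => Y p.1 p.2 ≠ 0 ∧ Y p.1 p.2 ≠ 1)) := by
    obtain ⟨_, h1, h2⟩ := hDW pm.1 pm.2 hDpm
    rw [Finset.mem_filter]
    exact ⟨Finset.mem_univ _, ne_of_gt h1, ne_of_lt h2⟩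
  have hpmnot : pm ∉ ((univ : Finset (Fin n × Fin k)).filter
      (fun p => Y' p.1 p.2 ≠ 0 ∧ Y' p.1 p.2 ≠ 1)) := by
    intro hmem'
    rw [Finset.mem_filter] at hmem'
    obtain ⟨_, h0, h1⟩ := hmem'
    by_cases hpos : 0 < Dc pm.1 pm.2
    · apply h1
      rw [hY'Eq pm.1 pm.2]
      have hτ' : τ = (1 - Y pm.1 pm.2) / Dc pm.1 pm.2 := by
        rw [hτdef, hbndEq pm, if_pos hpos]
      rw [hτ', div_mul_cancel₀ _ (ne_of_gt hpos)]
      ring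
    · have hneg : Dc pm.1 pm.2 < 0 := lt_of_le_of_ne (not_lt.mp hpos) hDpm
      apply h0
      rw [hY'Eq pm.1 pm.2]
      have hτ' : τ = Y pm.1 pm.2 / (-Dc pm.1 pm.2) := by
        rw [hτdef, hbndEq pm, if_neg hpos]
      have hcc : Y pm.1 pm.2 / (-Dc pm.1 pm.2) * Dc pm.1 pm.2 = -(Y pm.1 pm.2) := by
        rw [div_mul_eq_mul_div, mul_div_assoc, div_neg, div_self hDpm]
        ring
      rw [hτ', hcc]
      ring
  refine ⟨Y', hY'frac, hGpres, ?_⟩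
  exact Finset.card_lt_card ((Finset.ssubset_iff_of_subset hsub).mpr ⟨pm, hpmfracY, hpmnot⟩)

lemma main_ind {n m t k s : ℕ} (hk : 2 ≤ k) (ht : 1 ≤ t) (hs : 1 ≤ s)
    (S : Fin m → Multiset (Finset (Fin n)))
    (hsparse : ∀ j : Fin n, (∑ i, ((S i).filter (fun s' => j ∈ s')).card) ≤ t)
    (hsize : ∀ i : Fin m, ∀ s' ∈ S i, s'.card ≤ s) :
    ∀ N : ℕ, ∀ Y : Fin n → Fin k → ℝ, IsFracColoring Y →
    (∀ (i : Fin m) (ℓ ℓ' : Fin k), Gv (S i) (fun j => Y j ℓ) = Gv (S i) (fun j => Y j ℓ')) →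
    ((univ : Finset (Fin n × Fin k)).filter (fun p => Y p.1 p.2 ≠ 0 ∧ Y p.1 p.2 ≠ 1)).card ≤ N →
    ∃ Y' : Fin n → Fin k → ℝ, IsFracColoring Y' ∧
      (∀ (i : Fin m) (ℓ ℓ' : Fin k), Gv (S i) (fun j => Y' j ℓ) = Gv (S i) (fun j => Y' j ℓ')) ∧
      ((univ : Finset (Fin n)).filter (fun j => ¬ ∀ ℓ, Y' j ℓ = 0 ∨ Y' j ℓ = 1)).card
        ≤ m * k * (t * s) := by
  intro N
  induction N with
  | zero =>
    intro Y hY hG hcard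
    by_cases hz : ((univ : Finset (Fin n)).filter
        (fun j => ¬ ∀ ℓ, Y j ℓ = 0 ∨ Y j ℓ = 1)).card ≤ m * k * (t * s)
    · exact ⟨Y, hY, hG, hz⟩
    · rw [not_le] at hz
      obtain ⟨Y', _, _, hlt⟩ := step_lemma hk ht hs S hsparse hsize Y hY hz
      omega
  | succ N ih =>
    intro Y hY hG hcard
    by_cases hz : ((univ : Finset (Fin n)).filter
        (fun j => ¬ ∀ ℓ, Y j ℓ = 0 ∨ Y j ℓ = 1)).card ≤ m * k * (t * s)
    · exact ⟨Y, hY, hG, hz⟩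
    · rw [not_le] at hz
      obtain ⟨Y', hY', hpres, hlt⟩ := step_lemma hk ht hs S hsparse hsize Y hY hz
      refine ih Y' hY' (fun i ℓ ℓ' => ?_) (by omega)
      rw [hpres i ℓ, hpres i ℓ']
      exact hG i ℓ ℓ'

/-- for a `t`-sparse family of coverage functions with sets of size at
most `s`, there is a fractional `k`-coloring with at most `m·k·t·s` fractional
elements whose multilinear-extension values agree across all colors. -/
theorem fractional_coloring_few_fractional_elements
    (n m t k s : ℕ) (hk : 2 ≤ k)
    (S : Fin m → Multiset (Finset (Fin n)))
    (hsparse : ∀ j : Fin n, (∑ i, ((S i).filter (fun s' => j ∈ s')).card) ≤ t)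
    (hsize : ∀ i : Fin m, ∀ s' ∈ S i, s'.card ≤ s) :
    ∃ Y : Fin n → Fin k → ℝ, IsFracColoring Y ∧
      (∃ Z : Finset (Fin n),
        (∀ j : Fin n, j ∈ Z ↔ ¬ (∀ ℓ, Y j ℓ = 0 ∨ Y j ℓ = 1)) ∧
        Z.card ≤ m * k * t * s) ∧
      (∀ (i : Fin m) (ℓ ℓ' : Fin k),
        mlext (cov (S i)) (fun j => Y j ℓ) = mlext (cov (S i)) (fun j => Y j ℓ')) := by
  classical
  by_cases hts : 1 ≤ t ∧ 1 ≤ s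
  · obtain ⟨ht, hs⟩ := hts
    -- start from the uniform coloring
    set Y0 : Fin n → Fin k → ℝ := fun _ _ => (k : ℝ)⁻¹ with hY0def
    have hkpos : (0:ℝ) < k := by exact_mod_cast (by omega : 0 < k)
    have hk0 : (k:ℝ) ≠ 0 := ne_of_gt hkpos
    have hk1 : (1:ℝ) ≤ k := by exact_mod_cast (by omega : 1 ≤ k)
    have hY0 : IsFracColoring Y0 := by
      intro j
      constructor
      · intro ℓ
        constructor
        · simp only [hY0def]
          positivity
        · simp only [hY0def]
          rw [inv_eq_one_div, div_le_one hkpos]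
          exact hk1
      · simp only [hY0def, Finset.sum_const, Finset.card_univ, Fintype.card_fin, nsmul_eq_mul]
        exact mul_inv_cancel₀ hk0
    have hG0 : ∀ (i : Fin m) (ℓ ℓ' : Fin k),
        Gv (S i) (fun j => Y0 j ℓ) = Gv (S i) (fun j => Y0 j ℓ') := fun i ℓ ℓ' => rfl
    obtain ⟨Y, hYfrac, hG, hZcard⟩ := main_ind hk ht hs S hsparse hsize
      (((univ : Finset (Fin n × Fin k)).filter
        (fun p => Y0 p.1 p.2 ≠ 0 ∧ Y0 p.1 p.2 ≠ 1)).card)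
      Y0 hY0 hG0 (le_refl _)
    refine ⟨Y, hYfrac, ⟨(univ : Finset (Fin n)).filter (fun j => ¬ ∀ ℓ, Y j ℓ = 0 ∨ Y j ℓ = 1),
      fun j => ?_, ?_⟩, fun i ℓ ℓ' => ?_⟩
    · simp [Finset.mem_filter]
    · calc ((univ : Finset (Fin n)).filter
          (fun j => ¬ ∀ ℓ, Y j ℓ = 0 ∨ Y j ℓ = 1)).card ≤ m * k * (t * s) := hZcard
        _ = m * k * t * s := by ring
    · rw [mlext_cov, mlext_cov]
      have e : ∀ x : Fin n → ℝ, ((S i).map (fun s' => 1 - ∏ j ∈ s', (1 - x j))).sum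
          = ((S i).map (fun _ => (1:ℝ))).sum - Gv (S i) x := fun x => Multiset.sum_map_sub
      rw [e, e, hG i ℓ ℓ']
  · -- degenerate case: all sets are empty
    push_neg at hts
    have hall : ∀ i : Fin m, ∀ s' ∈ S i, s' = (∅ : Finset (Fin n)) := by
      intro i s' hs'
      by_cases hscase : s = 0
      · have := hsize i s' hs'
        rw [hscase] at this
        exact Finset.card_eq_zero.mp (Nat.le_zero.mp this)
      · have ht0 : t = 0 := by
          rcases Nat.lt_or_ge t 1 with h | h
          · omega
          · exact absurd (hts h) (by omega)
        refine Finset.eq_empty_of_forall_notMem (fun j hj => ?_)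
        have h1 : s' ∈ (S i).filter (fun s'' => j ∈ s'') := Multiset.mem_filter.mpr ⟨hs', hj⟩
        have h2 : 0 < ((S i).filter (fun s'' => j ∈ s'')).card :=
          Multiset.card_pos.mpr (fun hnil => by rw [hnil] at h1; exact Multiset.notMem_zero s' h1)
        have h3 : ((S i).filter (fun s'' => j ∈ s'')).card ≤ ∑ i', ((S i').filter (fun s'' => j ∈ s'')).card :=
          Finset.single_le_sum (f := fun i' => ((S i').filter (fun s'' => j ∈ s'')).card)
            (fun _ _ => Nat.zero_le _) (Finset.mem_univ i)
        have := hsparse j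
        omega
    set Y : Fin n → Fin k → ℝ := fun _ ℓ => if ℓ = (⟨0, by omega⟩ : Fin k) then 1 else 0 with hYdef
    have hYfrac : IsFracColoring Y := by
      intro j
      constructor
      · intro ℓ
        by_cases h : ℓ = (⟨0, by omega⟩ : Fin k)
        · simp [hYdef, h]
        · simp [hYdef, h]
      · simp only [hYdef]
        rw [Finset.sum_ite_eq' univ (⟨0, by omega⟩ : Fin k) (fun _ => (1:ℝ))]
        simp
    have hcov0 : ∀ i : Fin m, ∀ x : Fin n → ℝ, mlext (cov (S i)) x = 0 := by
      intro i x
      rw [mlext_cov]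
      have : ∀ s' ∈ S i, (1 - ∏ j ∈ s', (1 - x j)) = (0:ℝ) := by
        intro s' hs'
        rw [hall i s' hs']
        simp
      rw [Multiset.map_congr rfl this]
      simp
    refine ⟨Y, hYfrac, ⟨∅, fun j => ?_, by simp⟩, fun i ℓ ℓ' => by rw [hcov0, hcov0]⟩
    simp only [Finset.notMem_empty, false_iff, not_not]
    intro ℓ
    by_cases h : ℓ = (⟨0, by omega⟩ : Fin k)
    · exact Or.inr (by simp [hYdef, h])
    · exact Or.inl (by simp [hYdef, h])
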